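/- For f := τ̂_DiM − τ on Ω, the Stein relation is exactly linear: for every S ∈ Ω, (Lf)(S) = −(n/(n₁ n₀)) · f(S), i.e., L(τ̂_DiM)(S) = −(n/(n₁ n₀)) (τ̂_DiM(S) − τ). Consequently, the difference-in-means estimator is design-unbiased: E_π[τ̂_DiM] = τ. -/

import Mathlib

open Finset

noncomputable section

/-- `Ω`: the collection of `m`-element subsets of `{1,…,n}`, as a `Finset`. -/
def ΩsetJ (n m : ℕ) : Finset (Finset (Fin n)) := Finset.powersetCard m Finset.univ

/-- Expectation with respect to the uniform distribution `π` on `Ω`. -/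
def EpiJ (n m : ℕ) (g : Finset (Fin n) → ℝ) : ℝ :=
  ((ΩsetJ n m).card : ℝ)⁻¹ * ∑ S ∈ ΩsetJ n m, g S

/-- The one-swap (Johnson) kernel: `P(S,S') = 1/(m(n−m))` if `|S ∩ S'| = m−1`, else `0`. -/
def johnsonP (n m : ℕ) (S S' : Finset (Fin n)) : ℝ :=
  if (S ∩ S').card = m - 1 then ((m * (n - m) : ℕ) : ℝ)⁻¹ else 0

/-- Carré du champ `Γ(f)(S) = (1/2) Σ_{S'} P(S,S') (f(S') − f(S))²`. -/
def gammaJ (n m : ℕ) (f : Finset (Fin n) → ℝ) (S : Finset (Fin n)) : ℝ :=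
  (1 / 2) * ∑ S' ∈ ΩsetJ n m, johnsonP n m S S' * (f S' - f S) ^ 2

/-- Variance with respect to the uniform distribution `π` on `Ω`. -/
def VarJ (n m : ℕ) (f : Finset (Fin n) → ℝ) : ℝ :=
  EpiJ n m fun S => (f S - EpiJ n m f) ^ 2

/-- Generator `(Lf)(S) = Σ_{S'} P(S,S') f(S') − f(S)`. -/
def LopJ (n m : ℕ) (f : Finset (Fin n) → ℝ) (S : Finset (Fin n)) : ℝ :=
  (∑ S' ∈ ΩsetJ n m, johnsonP n m S S' * f S') - f S

end

/-- The difference-in-means estimator. -/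
noncomputable def tauDiM {n : ℕ} (n₁ n₀ : ℕ) (y1 y0 : Fin n → ℝ)
    (S : Finset (Fin n)) : ℝ :=
  (n₁ : ℝ)⁻¹ * ∑ i ∈ S, y1 i - (n₀ : ℝ)⁻¹ * ∑ j ∈ Sᶜ, y0 j

lemma sum_johnson {n n₁ : ℕ} (h1 : 1 ≤ n₁) (S : Finset (Fin n)) (hS : S.card = n₁)
    (g : Finset (Fin n) → ℝ) :
    ∑ S' ∈ ΩsetJ n n₁, johnsonP n n₁ S S' * g S'
      = ((n₁ * (n - n₁) : ℕ) : ℝ)⁻¹ * ∑ p ∈ S ×ˢ Sᶜ, g (insert p.2 (S.erase p.1)) := by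
  have key : ∑ p ∈ S ×ˢ Sᶜ, g (insert p.2 (S.erase p.1))
      = ∑ S' ∈ (ΩsetJ n n₁).filter (fun S' => (S ∩ S').card = n₁ - 1), g S' := by
    apply Finset.sum_nbij (i := fun p => insert p.2 (S.erase p.1))
    · rintro ⟨a, b⟩ hp
      simp only [Finset.mem_product, Finset.mem_compl] at hp
      obtain ⟨ha, hb⟩ := hp
      have hbe : b ∉ S.erase a := fun h => hb (Finset.mem_of_mem_erase h)
      have hint : S ∩ insert b (S.erase a) = S.erase a := by
        ext x
        simp only [Finset.mem_inter, Finset.mem_insert, Finset.mem_erase]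
        constructor
        · rintro ⟨hx, hx2 | hx2⟩
          · exact absurd (hx2 ▸ hx) hb
          · exact hx2
        · rintro ⟨hx1, hx2⟩; exact ⟨hx2, Or.inr ⟨hx1, hx2⟩⟩
      simp only [Finset.mem_filter, ΩsetJ, Finset.mem_powersetCard]
      refine ⟨⟨Finset.subset_univ _, ?_⟩, ?_⟩
      · rw [Finset.card_insert_of_notMem hbe, Finset.card_erase_of_mem ha, hS]
        omega
      · rw [hint, Finset.card_erase_of_mem ha, hS]
    · rintro ⟨a₁, b₁⟩ hp1 ⟨a₂, b₂⟩ hp2 heq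
      simp only [Finset.coe_product, Set.mem_prod, Finset.mem_coe, Finset.mem_compl] at hp1 hp2
      obtain ⟨ha1, hb1⟩ := hp1
      obtain ⟨ha2, hb2⟩ := hp2
      simp only at heq
      have hb : b₁ = b₂ := by
        have : b₁ ∈ insert b₂ (S.erase a₂) := heq ▸ Finset.mem_insert_self _ _
        rcases Finset.mem_insert.mp this with h | h
        · exact h
        · exact absurd (Finset.mem_of_mem_erase h) hb1
      have ha : a₁ = a₂ := by
        by_contra hne
        have : a₂ ∈ insert b₁ (S.erase a₁) :=
          Finset.mem_insert.mpr (Or.inr (Finset.mem_erase.mpr ⟨fun h => hne h.symm, ha2⟩))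
        rw [heq] at this
        rcases Finset.mem_insert.mp this with h | h
        · exact hb2 (h ▸ ha2)
        · exact (Finset.mem_erase.mp h).1 rfl
      simp [Prod.ext_iff, ha, hb]
    · intro S' hS'
      simp only [Finset.coe_filter, Set.mem_setOf_eq, ΩsetJ, Finset.mem_powersetCard] at hS'
      obtain ⟨⟨_, hcard⟩, hint⟩ := hS'
      have hsd1 : (S \ S').card = 1 := by
        have := Finset.card_sdiff_add_card_inter S S'
        omega
      have hsd2 : (S' \ S).card = 1 := by
        have := Finset.card_sdiff_add_card_inter S' S
        rw [Finset.inter_comm] at this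
        omega
      obtain ⟨a, ha⟩ := Finset.card_eq_one.mp hsd1
      obtain ⟨b, hb⟩ := Finset.card_eq_one.mp hsd2
      have haS : a ∈ S ∧ a ∉ S' :=
        Finset.mem_sdiff.mp (ha ▸ Finset.mem_singleton_self a)
      have hbS : b ∈ S' ∧ b ∉ S :=
        Finset.mem_sdiff.mp (hb ▸ Finset.mem_singleton_self b)
      refine ⟨(a, b), by simp [haS.1, hbS.2], ?_⟩
      ext x
      simp only [Finset.mem_insert, Finset.mem_erase]
      have hax := Finset.ext_iff.mp ha x
      have hbx := Finset.ext_iff.mp hb x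
      simp only [Finset.mem_sdiff, Finset.mem_singleton] at hax hbx
      constructor
      · rintro (rfl | ⟨hxa, hxS⟩)
        · exact hbS.1
        · by_contra hxS'
          exact hxa (hax.mp ⟨hxS, hxS'⟩)
      · intro hxS'
        by_cases hxS : x ∈ S
        · exact Or.inr ⟨fun h => haS.2 (h ▸ hxS'), hxS⟩
        · exact Or.inl (hbx.mp ⟨hxS', hxS⟩)
    · intros; rfl
  rw [key]
  simp only [johnsonP, ite_mul, zero_mul]
  rw [Finset.sum_ite, Finset.sum_const_zero, add_zero, Finset.mul_sum]

lemma tau_swap {n n₁ n₀ : ℕ} (y1 y0 : Fin n → ℝ) (S : Finset (Fin n))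
    {a b : Fin n} (ha : a ∈ S) (hb : b ∉ S) :
    tauDiM n₁ n₀ y1 y0 (insert b (S.erase a))
      = tauDiM n₁ n₀ y1 y0 S
        + ((n₁ : ℝ)⁻¹ * y1 b + (n₀ : ℝ)⁻¹ * y0 b)
        - ((n₁ : ℝ)⁻¹ * y1 a + (n₀ : ℝ)⁻¹ * y0 a) := by
  have hbe : b ∉ S.erase a := fun h => hb (Finset.mem_of_mem_erase h)
  have h1 : ∑ i ∈ insert b (S.erase a), y1 i = ∑ i ∈ S, y1 i - y1 a + y1 b := by
    rw [Finset.sum_insert hbe, Finset.sum_erase_eq_sub ha]; ring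
  have h0T : ∑ i ∈ insert b (S.erase a), y0 i = ∑ i ∈ S, y0 i - y0 a + y0 b := by
    rw [Finset.sum_insert hbe, Finset.sum_erase_eq_sub ha]; ring
  have hc : ∀ T : Finset (Fin n), ∑ j ∈ Tᶜ, y0 j = ∑ j, y0 j - ∑ j ∈ T, y0 j := by
    intro T
    have := Finset.sum_add_sum_compl T y0
    linarith
  simp only [tauDiM, h1, hc, h0T]
  ring

lemma double_sum {n : ℕ} (S T : Finset (Fin n)) (c : ℝ) (u : Fin n → ℝ) :
    ∑ p ∈ S ×ˢ T, (c + u p.2 - u p.1)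
      = (S.card : ℝ) * T.card * c + (S.card : ℝ) * (∑ j ∈ T, u j)
        - (T.card : ℝ) * (∑ i ∈ S, u i) := by
  rw [Finset.sum_product]
  simp only [Finset.sum_add_distrib, Finset.sum_sub_distrib, Finset.sum_const,
    nsmul_eq_mul, Finset.mul_sum, Finset.sum_mul]
  ring

/-- the exactly linear Stein relation for difference-in-means:
`(Lf)(S) = −(n/(n₁n₀)) f(S)` for `f = τ̂_DiM − τ` on `Ω`, and design-unbiasedness
`E_π[τ̂_DiM] = τ`. -/
theorem stmt18 {n n₁ : ℕ} (hn : 2 ≤ n) (h1 : 1 ≤ n₁) (h2 : n₁ ≤ n - 1)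
    (y1 y0 : Fin n → ℝ) :
    (∀ S ∈ ΩsetJ n n₁,
      LopJ n n₁
          (fun S' => tauDiM n₁ (n - n₁) y1 y0 S' - (n : ℝ)⁻¹ * ∑ i, (y1 i - y0 i)) S
        = -((n : ℝ) / ((n₁ : ℝ) * ((n - n₁ : ℕ) : ℝ))) *
            (tauDiM n₁ (n - n₁) y1 y0 S - (n : ℝ)⁻¹ * ∑ i, (y1 i - y0 i))) ∧
    EpiJ n n₁ (tauDiM n₁ (n - n₁) y1 y0) = (n : ℝ)⁻¹ * ∑ i, (y1 i - y0 i) := by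
  have hn0 : 1 ≤ n - n₁ := by omega
  have hN1 : (n₁ : ℝ) ≠ 0 := Nat.cast_ne_zero.mpr (by omega)
  have hN0 : ((n - n₁ : ℕ) : ℝ) ≠ 0 := Nat.cast_ne_zero.mpr (by omega)
  have hNn : (n : ℝ) ≠ 0 := Nat.cast_ne_zero.mpr (by omega)
  have hNsum : (n₁ : ℝ) + ((n - n₁ : ℕ) : ℝ) = (n : ℝ) := by
    rw [← Nat.cast_add]; congr 1; omega
  have hmemcard : ∀ S ∈ ΩsetJ n n₁, S.card = n₁ ∧ Sᶜ.card = n - n₁ := by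
    intro S hS
    have hc : S.card = n₁ := by
      simpa [ΩsetJ, Finset.mem_powersetCard] using hS
    exact ⟨hc, by simp [Finset.card_compl, hc]⟩
  have part1 : ∀ S ∈ ΩsetJ n n₁,
      LopJ n n₁
          (fun S' => tauDiM n₁ (n - n₁) y1 y0 S' - (n : ℝ)⁻¹ * ∑ i, (y1 i - y0 i)) S
        = -((n : ℝ) / ((n₁ : ℝ) * ((n - n₁ : ℕ) : ℝ))) *
            (tauDiM n₁ (n - n₁) y1 y0 S - (n : ℝ)⁻¹ * ∑ i, (y1 i - y0 i)) := by
    intro S hS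
    obtain ⟨hcard, hccard⟩ := hmemcard S hS
    rw [LopJ, sum_johnson h1 S hcard]
    have hswap : ∀ p ∈ S ×ˢ Sᶜ,
        (fun S' => tauDiM n₁ (n - n₁) y1 y0 S' - (n : ℝ)⁻¹ * ∑ i, (y1 i - y0 i))
            (insert p.2 (S.erase p.1))
          = (tauDiM n₁ (n - n₁) y1 y0 S - (n : ℝ)⁻¹ * ∑ i, (y1 i - y0 i))
            + ((n₁ : ℝ)⁻¹ * y1 p.2 + ((n - n₁ : ℕ) : ℝ)⁻¹ * y0 p.2)
            - ((n₁ : ℝ)⁻¹ * y1 p.1 + ((n - n₁ : ℕ) : ℝ)⁻¹ * y0 p.1) := by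
      rintro ⟨a, b⟩ hp
      simp only [Finset.mem_product, Finset.mem_compl] at hp
      simp only
      rw [tau_swap y1 y0 S hp.1 hp.2]
      ring
    rw [Finset.sum_congr rfl hswap,
      double_sum S Sᶜ _ (fun x => (n₁ : ℝ)⁻¹ * y1 x + ((n - n₁ : ℕ) : ℝ)⁻¹ * y0 x),
      hcard, hccard]
    have hAB : ∑ i ∈ S, y1 i + ∑ j ∈ Sᶜ, y1 j = ∑ i, y1 i :=
      Finset.sum_add_sum_compl S y1
    have hCD : ∑ i ∈ S, y0 i + ∑ j ∈ Sᶜ, y0 j = ∑ i, y0 i :=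
      Finset.sum_add_sum_compl S y0
    have hτ : ∑ i, (y1 i - y0 i)
        = (∑ i ∈ S, y1 i + ∑ j ∈ Sᶜ, y1 j) - (∑ i ∈ S, y0 i + ∑ j ∈ Sᶜ, y0 j) := by
      rw [hAB, hCD, Finset.sum_sub_distrib]
    have hsub : ((n - n₁ : ℕ) : ℝ) = (n : ℝ) - (n₁ : ℝ) := by
      rw [Nat.cast_sub (by omega)]
    simp only [tauDiM, Finset.sum_add_distrib, ← Finset.mul_sum, Nat.cast_mul]
    rw [hτ]
    generalize ∑ i ∈ S, y1 i = A
    generalize ∑ j ∈ Sᶜ, y1 j = B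
    generalize ∑ i ∈ S, y0 i = C
    generalize ∑ j ∈ Sᶜ, y0 j = D
    rw [hsub] at hN0 ⊢
    have hN0' : (n : ℝ) - (n₁ : ℝ) ≠ 0 := hN0
    field_simp
    ring
  refine ⟨part1, ?_⟩
  have hrow : ∀ S ∈ ΩsetJ n n₁, ∑ S' ∈ ΩsetJ n n₁, johnsonP n n₁ S S' = 1 := by
    intro S hS
    obtain ⟨hcard, hccard⟩ := hmemcard S hS
    have h := sum_johnson h1 S hcard (fun _ => (1 : ℝ))
    simp only [mul_one] at h
    rw [h, Finset.sum_const, Finset.card_product, hcard, hccard, nsmul_eq_mul, mul_one,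
      inv_mul_cancel₀]
    exact Nat.cast_ne_zero.mpr (Nat.mul_ne_zero (by omega) (by omega))
  have hsym : ∀ S S', johnsonP n n₁ S S' = johnsonP n n₁ S' S := by
    intro S S'; simp [johnsonP, Finset.inter_comm]
  have hzero : ∑ S ∈ ΩsetJ n n₁,
      LopJ n n₁
        (fun S' => tauDiM n₁ (n - n₁) y1 y0 S' - (n : ℝ)⁻¹ * ∑ i, (y1 i - y0 i)) S = 0 := by
    simp only [LopJ]
    rw [Finset.sum_sub_distrib, Finset.sum_comm]
    have hin : ∀ S' ∈ ΩsetJ n n₁,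
        ∑ S ∈ ΩsetJ n n₁, johnsonP n n₁ S S' *
            (tauDiM n₁ (n - n₁) y1 y0 S' - (n : ℝ)⁻¹ * ∑ i, (y1 i - y0 i))
          = tauDiM n₁ (n - n₁) y1 y0 S' - (n : ℝ)⁻¹ * ∑ i, (y1 i - y0 i) := by
      intro S' hS'
      rw [← Finset.sum_mul]
      have hone : ∑ S ∈ ΩsetJ n n₁, johnsonP n n₁ S S' = 1 := by
        rw [Finset.sum_congr rfl (fun S _ => hsym S S')]
        exact hrow S' hS'
      rw [hone, one_mul]
    rw [Finset.sum_congr rfl hin, sub_self]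
  have hcsum : ∑ S ∈ ΩsetJ n n₁,
      (tauDiM n₁ (n - n₁) y1 y0 S - (n : ℝ)⁻¹ * ∑ i, (y1 i - y0 i)) = 0 := by
    rw [Finset.sum_congr rfl part1, ← Finset.mul_sum] at hzero
    have hcne : -((n : ℝ) / ((n₁ : ℝ) * ((n - n₁ : ℕ) : ℝ))) ≠ 0 :=
      neg_ne_zero.mpr (div_ne_zero hNn (mul_ne_zero hN1 hN0))
    exact (mul_eq_zero.mp hzero).resolve_left hcne
  have hΩcard : ((ΩsetJ n n₁).card : ℝ) ≠ 0 := by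
    have hc : (ΩsetJ n n₁).card = n.choose n₁ := by
      simp [ΩsetJ, Finset.card_powersetCard]
    rw [hc]
    exact Nat.cast_ne_zero.mpr (Nat.choose_pos (by omega)).ne'
  have hsum : ∑ S ∈ ΩsetJ n n₁, tauDiM n₁ (n - n₁) y1 y0 S
      = ((ΩsetJ n n₁).card : ℝ) * ((n : ℝ)⁻¹ * ∑ i, (y1 i - y0 i)) := by
    have h := hcsum
    rw [Finset.sum_sub_distrib, sub_eq_zero, Finset.sum_const, nsmul_eq_mul] at h
    exact h
  rw [EpiJ, hsum, ← mul_assoc, inv_mul_cancel₀ hΩcard, one_mul]
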